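/- Let (Ω, Σ, P) be a probability space with a filtration (𝓕_t)_{t≥0}, and let (V_t), (f_t), (g_t), (h_t), (α_t) be stochastic processes taking values in [0,∞), adapted to (𝓕_t), with each V_t integrable, satisfying E[V_{t+1} | 𝓕_t] ≤ (1 + f_t) V_t + g_t − α_t h_t almost surely for every t. Suppose that almost surely Σ_{t=0}^∞ f_t < ∞, Σ_{t=0}^∞ g_t < ∞ and Σ_{t=0}^∞ α_t = ∞, and suppose there exists a Class 𝓑 function η : [0,∞) → [0,∞) such that, almost surely, h_t ≥ η(V_t) for all t. Then V_t → 0 almost surely as t → ∞. -/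

import Mathlib

open MeasureTheory Filter Topology

/-- A function `η : [0,∞) → [0,∞)` (modelled on `ℝ`) is of Class 𝓑 if `η(0) = 0`,
`η` is nonnegative on `[0,∞)`, and `inf_{ε ≤ r ≤ M} η(r) > 0` whenever `0 < ε ≤ M`. -/
def ClassB (η : ℝ → ℝ) : Prop :=
  η 0 = 0 ∧ (∀ x, 0 ≤ x → 0 ≤ η x) ∧
    ∀ ε M : ℝ, 0 < ε → ε ≤ M → 0 < sInf (η '' Set.Icc ε M)


noncomputable def prodA (f : ℕ → ℝ) (n : ℕ) : ℝ := ∏ s ∈ Finset.range n, (1 + f s)⁻¹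

noncomputable def indJ (ξ : ℕ → ℝ) (a : ℝ) (n : ℕ) : ℝ :=
  if ∑ j ∈ Finset.range n, ξ j ≤ a then 1 else 0

noncomputable def procX (f g h α V : ℕ → ℝ) (a : ℝ) (n : ℕ) : ℝ :=
  indJ (fun j => prodA f (j + 1) * g j) a n * (prodA f n * V n)
    + ∑ k ∈ Finset.range n,
        (indJ (fun j => prodA f (j + 1) * g j) a (k + 1) * (prodA f (k + 1) * (α k * h k))
          - indJ (fun j => prodA f (j + 1) * g j) a (k + 1) * (prodA f (k + 1) * g k))
    + a


lemma prodA_pos {f : ℕ → ℝ} (hf : ∀ s, 0 ≤ f s) (n : ℕ) : 0 < prodA f n :=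
  Finset.prod_pos fun s _ => inv_pos.2 (by linarith [hf s])

lemma prodA_le_one {f : ℕ → ℝ} (hf : ∀ s, 0 ≤ f s) (n : ℕ) : prodA f n ≤ 1 :=
  Finset.prod_le_one (fun s _ => le_of_lt (inv_pos.2 (by linarith [hf s])))
    (fun s _ => inv_le_one_of_one_le₀ (by linarith [hf s]))

lemma prodA_succ (f : ℕ → ℝ) (n : ℕ) :
    prodA f (n + 1) = prodA f n * (1 + f n)⁻¹ := Finset.prod_range_succ _ n

lemma prodA_antitone {f : ℕ → ℝ} (hf : ∀ s, 0 ≤ f s) : Antitone (prodA f) := by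
  apply antitone_nat_of_succ_le
  intro n
  rw [prodA_succ]
  calc prodA f n * (1 + f n)⁻¹ ≤ prodA f n * 1 := by
        gcongr
        · exact (prodA_pos hf n).le
        · exact inv_le_one_of_one_le₀ (by linarith [hf n])
    _ = prodA f n := mul_one _

lemma prodA_ge {f : ℕ → ℝ} (hf : ∀ s, 0 ≤ f s) (hsum : Summable f) (n : ℕ) :
    Real.exp (- tsum f) ≤ prodA f n := by
  have h1 : ∏ s ∈ Finset.range n, (1 + f s) ≤ Real.exp (∑ s ∈ Finset.range n, f s) := by
    rw [Real.exp_sum]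
    exact Finset.prod_le_prod (fun s _ => by linarith [hf s])
      (fun s _ => by linarith [Real.add_one_le_exp (f s)])
  have h2 : ∑ s ∈ Finset.range n, f s ≤ tsum f := Summable.sum_le_tsum _ (fun i _ => hf i) hsum
  have hp : (0:ℝ) < ∏ s ∈ Finset.range n, (1 + f s) :=
    Finset.prod_pos fun s _ => by linarith [hf s]
  have : prodA f n = (∏ s ∈ Finset.range n, (1 + f s))⁻¹ := by
    rw [prodA, ← Finset.prod_inv_distrib]
  rw [this, Real.exp_neg]
  exact inv_anti₀ hp (h1.trans (Real.exp_le_exp.2 h2))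

lemma indJ_nonneg (ξ : ℕ → ℝ) (a : ℝ) (n : ℕ) : 0 ≤ indJ ξ a n := by
  unfold indJ; split <;> norm_num

lemma indJ_le_one (ξ : ℕ → ℝ) (a : ℝ) (n : ℕ) : indJ ξ a n ≤ 1 := by
  unfold indJ; split <;> norm_num

lemma indJ_antitone {ξ : ℕ → ℝ} (hξ : ∀ j, 0 ≤ ξ j) (a : ℝ) : Antitone (indJ ξ a) := by
  apply antitone_nat_of_succ_le
  intro n
  unfold indJ
  split_ifs with h1 h2
  · exact le_refl 1
  · exact absurd (le_trans (Finset.sum_le_sum_of_subset_of_nonneg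
      (Finset.range_subset_range.2 (Nat.le_succ n)) (fun i _ _ => hξ i)) h1) h2
  · exact zero_le_one
  · exact le_refl 0

lemma indJ_mul_le {ξ : ℕ → ℝ} (hξ : ∀ j, 0 ≤ ξ j) {a : ℝ} (ha : 0 ≤ a) (k : ℕ) :
    indJ ξ a (k + 1) * ξ k ≤ a := by
  unfold indJ
  split_ifs with h
  · rw [one_mul]
    exact le_trans (Finset.single_le_sum (fun i _ => hξ i) (Finset.self_mem_range_succ k)) h
  · rw [zero_mul]; exact ha

lemma sum_indJ_mul_le {ξ : ℕ → ℝ} (hξ : ∀ j, 0 ≤ ξ j) {a : ℝ} (ha : 0 ≤ a) (n : ℕ) :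
    ∑ k ∈ Finset.range n, indJ ξ a (k + 1) * ξ k ≤ a := by
  induction n with
  | zero => simpa using ha
  | succ n ih =>
    rw [Finset.sum_range_succ]
    rcases le_or_gt (∑ j ∈ Finset.range (n + 1), ξ j) a with h | h
    · calc ∑ k ∈ Finset.range n, indJ ξ a (k + 1) * ξ k + indJ ξ a (n + 1) * ξ n
          ≤ ∑ k ∈ Finset.range n, ξ k + ξ n := by
            gcongr with k hk
            · exact mul_le_of_le_one_left (hξ k) (indJ_le_one _ _ _)
            · exact mul_le_of_le_one_left (hξ n) (indJ_le_one _ _ _)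
        _ = ∑ j ∈ Finset.range (n + 1), ξ j := (Finset.sum_range_succ _ _).symm
        _ ≤ a := h
    · have : indJ ξ a (n + 1) = 0 := by unfold indJ; rw [if_neg (not_le.2 h)]
      rw [this, zero_mul, add_zero]; exact ih

lemma ptwise (V f g h α : ℕ → ℝ) (η : ℝ → ℝ)
    (hVnn : ∀ t, 0 ≤ V t) (hfnn : ∀ t, 0 ≤ f t) (hgnn : ∀ t, 0 ≤ g t)
    (hhnn : ∀ t, 0 ≤ h t) (hαnn : ∀ t, 0 ≤ α t)
    (hη : ClassB η) (hlb : ∀ t, η (V t) ≤ h t)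
    (hf : Summable f) (hg : Summable g)
    (hα : Tendsto (fun n => ∑ t ∈ Finset.range n, α t) atTop atTop)
    (hconv : ∀ a : ℕ, ∃ c, Tendsto (fun n => procX f g h α V (a : ℝ) n) atTop (𝓝 c)) :
    Tendsto V atTop (nhds 0) := by
  set A : ℕ → ℝ := prodA f with hA
  set ξ : ℕ → ℝ := fun j => A (j + 1) * g j with hξdef
  set ζ : ℕ → ℝ := fun j => A (j + 1) * (α j * h j) with hζdef
  have hApos : ∀ n, 0 < A n := prodA_pos hfnn
  have hAle : ∀ n, A n ≤ 1 := prodA_le_one hfnn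
  have hc0 : ∀ n, Real.exp (- tsum f) ≤ A n := prodA_ge hfnn hf
  set c0 : ℝ := Real.exp (- tsum f) with hc0def
  have hc0pos : 0 < c0 := Real.exp_pos _
  have hξnn : ∀ j, 0 ≤ ξ j := fun j => mul_nonneg (hApos _).le (hgnn j)
  have hζnn : ∀ j, 0 ≤ ζ j := fun j =>
    mul_nonneg (hApos _).le (mul_nonneg (hαnn j) (hhnn j))
  -- ξ is summable
  have hξsum : Summable ξ := by
    apply Summable.of_nonneg_of_le hξnn (fun j => ?_) hg
    exact mul_le_of_le_one_left (hgnn j) (hAle _)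
  -- choose a with all partial sums ≤ a
  obtain ⟨a, ha⟩ : ∃ a : ℕ, tsum ξ ≤ (a : ℝ) := exists_nat_ge (tsum ξ)
  have hJ1 : ∀ n, indJ ξ (a : ℝ) n = 1 := by
    intro n
    unfold indJ
    rw [if_pos (le_trans (Summable.sum_le_tsum _ (fun i _ => hξnn i) hξsum) ha)]
  obtain ⟨c, hc⟩ := hconv a
  -- simplify procX
  have hXeq : ∀ n, procX f g h α V (a : ℝ) n
      = A n * V n + ∑ k ∈ Finset.range n, (ζ k - ξ k) + a := by
    intro n
    unfold procX
    rw [hJ1, one_mul]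
    congr 1
    congr 1
    apply Finset.sum_congr rfl
    intro k _
    rw [hJ1, one_mul, one_mul]
  have hc' : Tendsto (fun n => A n * V n + ∑ k ∈ Finset.range n, (ζ k - ξ k)) atTop
      (𝓝 (c - a)) := by
    have := hc.sub (tendsto_const_nhds (x := (a : ℝ)))
    apply this.congr
    intro n
    rw [hXeq n]; ring
  -- partial sums of ξ converge
  have hξps : Tendsto (fun n => ∑ k ∈ Finset.range n, ξ k) atTop (𝓝 (tsum ξ)) :=
    hξsum.hasSum.tendsto_sum_nat
  have hsub : ∀ n, A n * V n + ∑ k ∈ Finset.range n, (ζ k - ξ k)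
      + ∑ k ∈ Finset.range n, ξ k = A n * V n + ∑ k ∈ Finset.range n, ζ k := by
    intro n
    rw [Finset.sum_sub_distrib]; ring
  have hc'' : Tendsto (fun n => A n * V n + ∑ k ∈ Finset.range n, ζ k) atTop
      (𝓝 (c - a + tsum ξ)) := by
    have := hc'.add hξps
    exact this.congr hsub
  set c2 : ℝ := c - a + tsum ξ
  -- ζ is summable
  have hζps_le : ∀ n, ∑ k ∈ Finset.range n, ζ k ≤ c2 := by
    intro n
    refine ge_of_tendsto hc'' ?_
    filter_upwards [eventually_ge_atTop n] with m hm
    calc ∑ k ∈ Finset.range n, ζ k ≤ ∑ k ∈ Finset.range m, ζ k :=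
          Finset.sum_le_sum_of_subset_of_nonneg (Finset.range_subset_range.2 hm) (fun i _ _ => hζnn i)
      _ ≤ A m * V m + ∑ k ∈ Finset.range m, ζ k := by
          nlinarith [mul_nonneg (hApos m).le (hVnn m)]
  have hζsum : Summable ζ := summable_of_sum_range_le hζnn hζps_le
  have hζps : Tendsto (fun n => ∑ k ∈ Finset.range n, ζ k) atTop (𝓝 (tsum ζ)) :=
    hζsum.hasSum.tendsto_sum_nat
  -- A n * V n converges
  have hAV : Tendsto (fun n => A n * V n) atTop (𝓝 (c2 - tsum ζ)) := by
    have := hc''.sub hζps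
    apply this.congr
    intro n; ring
  -- A converges to a positive limit
  have hAbdd : BddBelow (Set.range A) := ⟨c0, fun x ⟨n, hn⟩ => hn ▸ hc0 n⟩
  have hAtend : Tendsto A atTop (𝓝 (⨅ n, A n)) :=
    tendsto_atTop_ciInf (prodA_antitone hfnn) hAbdd
  set Ainf : ℝ := ⨅ n, A n with hAinfdef
  have hAinfpos : 0 < Ainf := lt_of_lt_of_le hc0pos (le_ciInf hc0)
  have hAinfle : ∀ n, Ainf ≤ A n := fun n => ciInf_le hAbdd n
  -- V converges
  set L : ℝ := (c2 - tsum ζ) / Ainf with hLdef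
  have hV : Tendsto V atTop (𝓝 L) := by
    have := hAV.div hAtend (ne_of_gt hAinfpos)
    apply this.congr
    intro n
    show A n * V n / A n = V n
    rw [mul_comm, mul_div_assoc, div_self (ne_of_gt (hApos n)), mul_one]
  have hLnn : 0 ≤ L := ge_of_tendsto' hV (fun n => hVnn n)
  -- α * h is summable
  have hαh : Summable (fun k => α k * h k) := by
    refine Summable.of_nonneg_of_le (fun k => mul_nonneg (hαnn k) (hhnn k)) (fun k => ?_)
      (hζsum.div_const c0)
    rw [le_div_iff₀ hc0pos]
    calc α k * h k * c0 ≤ α k * h k * A (k + 1) := by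
          have := mul_nonneg (hαnn k) (hhnn k); nlinarith [hc0 (k + 1)]
      _ = ζ k := by show _ = A (k+1) * (α k * h k); ring
  -- L must be 0
  have hL0 : L = 0 := by
    by_contra hL
    have hLpos : 0 < L := lt_of_le_of_ne hLnn (Ne.symm hL)
    obtain ⟨N, hN⟩ : ∃ N, ∀ n ≥ N, V n ∈ Set.Icc (L / 2) (2 * L) := by
      have hball := hV.eventually (Metric.ball_mem_nhds L (by positivity : (0:ℝ) < L / 2))
      rw [eventually_atTop] at hball
      obtain ⟨N, hN⟩ := hball
      refine ⟨N, fun n hn => ?_⟩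
      have := hN n hn
      rw [Real.dist_eq, abs_lt] at this
      constructor <;> [linarith [this.1]; linarith [this.2]]
    set c3 : ℝ := sInf (η '' Set.Icc (L / 2) (2 * L)) with hc3def
    have hc3pos : 0 < c3 := hη.2.2 (L / 2) (2 * L) (by positivity) (by linarith)
    have hbd : ∀ y ∈ η '' Set.Icc (L / 2) (2 * L), (0:ℝ) ≤ y := by
      rintro y ⟨x, hx, rfl⟩
      exact hη.2.1 x (by linarith [hx.1])
    have hηV : ∀ n ≥ N, c3 ≤ η (V n) := fun n hn =>
      csInf_le ⟨0, fun y hy => hbd y hy⟩ (Set.mem_image_of_mem η (hN n hn))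
    -- α is summable, contradiction
    have hαsum : Summable α := by
      rw [← summable_nat_add_iff N]
      refine Summable.of_nonneg_of_le (fun k => hαnn _) (fun k => ?_)
        (((summable_nat_add_iff N).2 hαh).div_const c3)
      rw [le_div_iff₀ hc3pos]
      have h1 : c3 ≤ h (k + N) := le_trans (hηV (k + N) (Nat.le_add_left N k)) (hlb (k + N))
      nlinarith [hαnn (k + N)]
    exact not_tendsto_atTop_of_tendsto_nhds hαsum.hasSum.tendsto_sum_nat hα
  rwa [hL0] at hV

/-- If `(V_t), (f_t), (g_t), (h_t), (α_t)` are nonnegative adapted processes with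
`V_t` integrable, `E[V_{t+1} | 𝓕_t] ≤ (1 + f_t) V_t + g_t - α_t h_t` a.s. for every
`t`, `Σ f_t < ∞`, `Σ g_t < ∞` and `Σ α_t = ∞` a.s., and `h_t ≥ η(V_t)` a.s. for all
`t` for some Class 𝓑 function `η`, then `V_t → 0` a.s. -/
theorem stmt_11 {Ω : Type*} {mΩ : MeasurableSpace Ω} (P : Measure Ω)
    [IsProbabilityMeasure P] (𝓕 : Filtration ℕ mΩ)
    (V f g h α : ℕ → Ω → ℝ)
    (hVnn : ∀ t ω, 0 ≤ V t ω) (hfnn : ∀ t ω, 0 ≤ f t ω)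
    (hgnn : ∀ t ω, 0 ≤ g t ω) (hhnn : ∀ t ω, 0 ≤ h t ω)
    (hαnn : ∀ t ω, 0 ≤ α t ω)
    (hVadp : StronglyAdapted 𝓕 V) (hfadp : StronglyAdapted 𝓕 f)
    (hgadp : StronglyAdapted 𝓕 g) (hhadp : StronglyAdapted 𝓕 h) (hαadp : StronglyAdapted 𝓕 α)
    (hVint : ∀ t, Integrable (V t) P)
    (hineq : ∀ t, ∀ᵐ ω ∂P,
      (P[V (t + 1)|𝓕 t]) ω ≤ (1 + f t ω) * V t ω + g t ω - α t ω * h t ω)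
    (hf : ∀ᵐ ω ∂P, Summable (fun t => f t ω))
    (hg : ∀ᵐ ω ∂P, Summable (fun t => g t ω))
    (hα : ∀ᵐ ω ∂P, Tendsto (fun n => ∑ t ∈ Finset.range n, α t ω) atTop atTop)
    (η : ℝ → ℝ) (hη : ClassB η)
    (hlb : ∀ᵐ ω ∂P, ∀ t, η (V t ω) ≤ h t ω) :
    ∀ᵐ ω ∂P, Tendsto (fun t => V t ω) atTop (nhds 0) := by
  classical
  -- path-wise auxiliary processes
  set A : ℕ → Ω → ℝ := fun n ω => prodA (fun s => f s ω) n with hAdef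
  set ξ : ℕ → Ω → ℝ := fun k ω => A (k + 1) ω * g k ω with hξdef
  set J : ℕ → ℕ → Ω → ℝ := fun a n ω => indJ (fun j => ξ j ω) (a : ℝ) n with hJdef
  set X : ℕ → ℕ → Ω → ℝ := fun a n ω =>
    J a n ω * (A n ω * V n ω)
      + ∑ k ∈ Finset.range n,
          (J a (k + 1) ω * (A (k + 1) ω * (α k ω * h k ω)) - J a (k + 1) ω * ξ k ω)
      + a with hXdef
  -- pointwise facts
  have hAp : ∀ n ω, 0 < A n ω := fun n ω => prodA_pos (fun s => hfnn s ω) n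
  have hA1 : ∀ n ω, A n ω ≤ 1 := fun n ω => prodA_le_one (fun s => hfnn s ω) n
  have hξnn : ∀ k ω, 0 ≤ ξ k ω := fun k ω => mul_nonneg (hAp _ ω).le (hgnn k ω)
  have hJnn : ∀ a n ω, 0 ≤ J a n ω := fun a n ω => indJ_nonneg _ _ n
  have hJ1 : ∀ a n ω, J a n ω ≤ 1 := fun a n ω => indJ_le_one _ _ n
  have hJmono : ∀ (a : ℕ) (ω) {m n : ℕ}, m ≤ n → J a n ω ≤ J a m ω :=
    fun a ω m n hmn => indJ_antitone (fun j => hξnn j ω) _ hmn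
  have hJξle : ∀ (a : ℕ) k ω, J a (k + 1) ω * ξ k ω ≤ (a : ℝ) :=
    fun a k ω => indJ_mul_le (fun j => hξnn j ω) (Nat.cast_nonneg a) k
  have hAstep : ∀ k ω, A (k + 1) ω * (1 + f k ω) = A k ω := by
    intro k ω
    have : A (k + 1) ω = A k ω * (1 + f k ω)⁻¹ := Finset.prod_range_succ _ k
    rw [this, mul_assoc, inv_mul_cancel₀ (by nlinarith [hfnn k ω] : (1 : ℝ) + f k ω ≠ 0), mul_one]
  -- measurability
  have hAsm : ∀ n m : ℕ, n ≤ m + 1 → StronglyMeasurable[𝓕 m] (A n) := by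
    intro n m hnm
    apply Measurable.stronglyMeasurable
    apply Finset.measurable_prod
    intro s hs
    have hsm : s ≤ m := by
      have := Finset.mem_range.1 hs; omega
    exact (measurable_const.add ((hfadp s).mono (𝓕.mono hsm)).measurable).inv
  have hξsm : ∀ k m : ℕ, k ≤ m → StronglyMeasurable[𝓕 m] (ξ k) := by
    intro k m hkm
    exact ((hAsm (k + 1) m (by omega)).measurable.mul
      ((hgadp k).mono (𝓕.mono hkm)).measurable).stronglyMeasurable
  have hJsm : ∀ (a : ℕ) (n m : ℕ), n ≤ m + 1 → StronglyMeasurable[𝓕 m] (J a n) := by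
    intro a n m hnm
    apply Measurable.stronglyMeasurable
    have hset : MeasurableSet[𝓕 m] {ω | ∑ j ∈ Finset.range n, ξ j ω ≤ (a : ℝ)} := by
      apply measurableSet_le _ measurable_const
      apply Finset.measurable_sum
      intro j hj
      exact (hξsm j m (by have := Finset.mem_range.1 hj; omega)).measurable
    exact Measurable.ite hset measurable_const measurable_const
  have hsm0 : ∀ (a : ℕ) (n : ℕ), StronglyMeasurable[mΩ] fun ω => J a n ω * (A n ω * V n ω) := by
    intro a n
    exact (((hJsm a n n n.le_succ).mono (𝓕.le n)).measurable.mul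
      (((hAsm n n n.le_succ).mono (𝓕.le n)).measurable.mul
        (((hVadp n).mono (𝓕.le n)).measurable))).stronglyMeasurable
  -- integrability of the pieces
  have hT1int : ∀ (a : ℕ) (n : ℕ), Integrable (fun ω => J a n ω * (A n ω * V n ω)) P := by
    intro a n
    refine Integrable.mono' (hVint n) (hsm0 a n).aestronglyMeasurable (ae_of_all _ fun ω => ?_)
    have h0 : 0 ≤ J a n ω * (A n ω * V n ω) :=
      mul_nonneg (hJnn a n ω) (mul_nonneg (hAp n ω).le (hVnn n ω))
    rw [Real.norm_eq_abs, abs_of_nonneg h0]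
    nlinarith [hJ1 a n ω, hA1 n ω, hVnn n ω, hJnn a n ω, (hAp n ω).le,
      mul_nonneg (hAp n ω).le (hVnn n ω)]
  have hJξsm : ∀ (a : ℕ) (k : ℕ), StronglyMeasurable[mΩ] fun ω => J a (k + 1) ω * ξ k ω := by
    intro a k
    exact (((hJsm a (k + 1) k le_rfl).mono (𝓕.le k)).measurable.mul
      (((hξsm k k le_rfl).mono (𝓕.le k)).measurable)).stronglyMeasurable
  have hJξint : ∀ (a : ℕ) (k : ℕ), Integrable (fun ω => J a (k + 1) ω * ξ k ω) P := by
    intro a k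
    refine Integrable.mono' (integrable_const (a : ℝ)) (hJξsm a k).aestronglyMeasurable
      (ae_of_all _ fun ω => ?_)
    have h0 : 0 ≤ J a (k + 1) ω * ξ k ω := mul_nonneg (hJnn a _ ω) (hξnn k ω)
    rw [Real.norm_eq_abs, abs_of_nonneg h0]
    exact hJξle a k ω
  have hDnn : ∀ t : ℕ, (0 : Ω → ℝ) ≤ᵐ[P] P[V (t + 1)|𝓕 t] := fun t =>
    condExp_nonneg (ae_of_all _ fun ω => hVnn (t + 1) ω)
  -- the key a.e. inequality from hineq
  have hmain : ∀ (a : ℕ) (k : ℕ), ∀ᵐ ω ∂P,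
      J a (k + 1) ω * (A (k + 1) ω * (P[V (k + 1)|𝓕 k]) ω)
        ≤ J a (k + 1) ω * (A k ω * V k ω) + J a (k + 1) ω * ξ k ω
          - J a (k + 1) ω * (A (k + 1) ω * (α k ω * h k ω)) := by
    intro a k
    filter_upwards [hineq k] with ω hω
    have hJA : 0 ≤ J a (k + 1) ω * A (k + 1) ω :=
      mul_nonneg (hJnn a _ ω) (hAp _ ω).le
    have h1 : J a (k + 1) ω * A (k + 1) ω * ((P[V (k + 1)|𝓕 k]) ω)
        ≤ J a (k + 1) ω * A (k + 1) ω * ((1 + f k ω) * V k ω + g k ω - α k ω * h k ω) :=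
      mul_le_mul_of_nonneg_left hω hJA
    have h2 : A (k + 1) ω * ((1 + f k ω) * V k ω + g k ω - α k ω * h k ω)
        = A k ω * V k ω + ξ k ω - A (k + 1) ω * (α k ω * h k ω) := by
      have := hAstep k ω
      show _ = A k ω * V k ω + A (k + 1) ω * g k ω - A (k + 1) ω * (α k ω * h k ω)
      linear_combination V k ω * this
    calc J a (k + 1) ω * (A (k + 1) ω * (P[V (k + 1)|𝓕 k]) ω)
        = J a (k + 1) ω * A (k + 1) ω * ((P[V (k + 1)|𝓕 k]) ω) := by ring
      _ ≤ J a (k + 1) ω * A (k + 1) ω * ((1 + f k ω) * V k ω + g k ω - α k ω * h k ω) := h1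
      _ = J a (k + 1) ω * (A (k + 1) ω * ((1 + f k ω) * V k ω + g k ω - α k ω * h k ω)) := by
          ring
      _ = J a (k + 1) ω * (A k ω * V k ω + ξ k ω - A (k + 1) ω * (α k ω * h k ω)) := by rw [h2]
      _ = J a (k + 1) ω * (A k ω * V k ω) + J a (k + 1) ω * ξ k ω
          - J a (k + 1) ω * (A (k + 1) ω * (α k ω * h k ω)) := by ring
  -- a.e. bound for the J ζ term
  have hζbd : ∀ (a : ℕ) (k : ℕ), ∀ᵐ ω ∂P,
      J a (k + 1) ω * (A (k + 1) ω * (α k ω * h k ω)) ≤ V k ω + a := by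
    intro a k
    filter_upwards [hmain a k, hDnn k] with ω h1 h2
    have h3 : 0 ≤ J a (k + 1) ω * (A (k + 1) ω * (P[V (k + 1)|𝓕 k]) ω) :=
      mul_nonneg (hJnn a _ ω) (mul_nonneg (hAp _ ω).le h2)
    have h4 : J a (k + 1) ω * (A k ω * V k ω) ≤ V k ω := by
      nlinarith [hJ1 a (k + 1) ω, hJnn a (k + 1) ω, hA1 k ω, (hAp k ω).le, hVnn k ω,
        mul_nonneg (hAp k ω).le (hVnn k ω)]
    nlinarith [hJξle a k ω]
  have hJζsm : ∀ (a : ℕ) (k : ℕ),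
      StronglyMeasurable[mΩ] fun ω => J a (k + 1) ω * (A (k + 1) ω * (α k ω * h k ω)) := by
    intro a k
    exact (((hJsm a (k + 1) k le_rfl).mono (𝓕.le k)).measurable.mul
      ((((hAsm (k + 1) k le_rfl).mono (𝓕.le k)).measurable).mul
        ((((hαadp k).mono (𝓕.le k)).measurable).mul
          (((hhadp k).mono (𝓕.le k)).measurable)))).stronglyMeasurable
  have hJζint : ∀ (a : ℕ) (k : ℕ),
      Integrable (fun ω => J a (k + 1) ω * (A (k + 1) ω * (α k ω * h k ω))) P := by
    intro a k
    refine Integrable.mono' ((hVint k).add (integrable_const (a : ℝ)))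
      (hJζsm a k).aestronglyMeasurable ?_
    filter_upwards [hζbd a k] with ω hω
    have h0 : 0 ≤ J a (k + 1) ω * (A (k + 1) ω * (α k ω * h k ω)) :=
      mul_nonneg (hJnn a _ ω) (mul_nonneg (hAp _ ω).le
        (mul_nonneg (hαnn k ω) (hhnn k ω)))
    rw [Real.norm_eq_abs, abs_of_nonneg h0]
    exact hω
  -- integrability of X
  have hXint : ∀ (a : ℕ) (n : ℕ), Integrable (X a n) P := by
    intro a n
    apply Integrable.add
    apply Integrable.add (hT1int a n)
    · apply integrable_finset_sum
      intro k _
      exact (hJζint a k).sub (hJξint a k)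
    · exact integrable_const _
  -- X is adapted
  have hXadp : ∀ a : ℕ, StronglyAdapted 𝓕 (X a) := by
    intro a n
    apply StronglyMeasurable.add
    apply StronglyMeasurable.add
    · exact ((hJsm a n n n.le_succ).measurable.mul
        ((hAsm n n n.le_succ).measurable.mul (hVadp n).measurable)).stronglyMeasurable
    · apply Measurable.stronglyMeasurable
      apply Finset.measurable_sum
      intro k hk
      have hkn : k < n := Finset.mem_range.1 hk
      have m1 : Measurable[𝓕 n] (J a (k + 1)) := (hJsm a (k + 1) n (by omega)).measurable
      have m2 : Measurable[𝓕 n] (A (k + 1)) := (hAsm (k + 1) n (by omega)).measurable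
      have m3 : Measurable[𝓕 n] (α k) := ((hαadp k).mono (𝓕.mono hkn.le)).measurable
      have m4 : Measurable[𝓕 n] (h k) := ((hhadp k).mono (𝓕.mono hkn.le)).measurable
      have m5 : Measurable[𝓕 n] (ξ k) := (hξsm k n hkn.le).measurable
      exact (m1.mul (m2.mul (m3.mul m4))).sub (m1.mul m5)
    · exact stronglyMeasurable_const
  -- supermartingale property
  have hsuper : ∀ a : ℕ, Supermartingale (X a) 𝓕 P := by
    intro a
    refine supermartingale_nat (hXadp a) (hXint a) fun n => ?_
    -- split X a (n+1)
    set R : Ω → ℝ := fun ω =>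
      ∑ k ∈ Finset.range (n + 1),
          (J a (k + 1) ω * (A (k + 1) ω * (α k ω * h k ω)) - J a (k + 1) ω * ξ k ω)
        + a with hRdef
    have hRsm : StronglyMeasurable[𝓕 n] R := by
      apply Measurable.stronglyMeasurable
      apply Measurable.add _ measurable_const
      apply Finset.measurable_sum
      intro k hk
      have hkn : k < n + 1 := Finset.mem_range.1 hk
      have m1 : Measurable[𝓕 n] (J a (k + 1)) := (hJsm a (k + 1) n (by omega)).measurable
      have m2 : Measurable[𝓕 n] (A (k + 1)) := (hAsm (k + 1) n (by omega)).measurable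
      have m3 : Measurable[𝓕 n] (α k) := ((hαadp k).mono (𝓕.mono (by omega))).measurable
      have m4 : Measurable[𝓕 n] (h k) := ((hhadp k).mono (𝓕.mono (by omega))).measurable
      have m5 : Measurable[𝓕 n] (ξ k) := (hξsm k n (by omega)).measurable
      exact (m1.mul (m2.mul (m3.mul m4))).sub (m1.mul m5)
    have hRint : Integrable R P := by
      apply Integrable.add _ (integrable_const _)
      apply integrable_finset_sum
      intro k _
      exact (hJζint a k).sub (hJξint a k)
    have hT1sm : StronglyMeasurable[𝓕 n] fun ω => J a (n + 1) ω * A (n + 1) ω :=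
      ((hJsm a (n + 1) n le_rfl).measurable.mul
        (hAsm (n + 1) n le_rfl).measurable).stronglyMeasurable
    have hsplit : X a (n + 1) = (fun ω => J a (n + 1) ω * A (n + 1) ω) * V (n + 1) + R := by
      funext ω
      show J a (n + 1) ω * (A (n + 1) ω * V (n + 1) ω) + _ + _
        = J a (n + 1) ω * A (n + 1) ω * V (n + 1) ω + R ω
      rw [hRdef]
      ring
    have hT1int' : Integrable ((fun ω => J a (n + 1) ω * A (n + 1) ω) * V (n + 1)) P := by
      refine (hT1int a (n + 1)).congr (ae_of_all _ fun ω => ?_)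
      show J a (n + 1) ω * (A (n + 1) ω * V (n + 1) ω)
        = J a (n + 1) ω * A (n + 1) ω * V (n + 1) ω
      ring
    have hce : P[X a (n + 1)|𝓕 n]
        =ᵐ[P] (fun ω => J a (n + 1) ω * A (n + 1) ω) * P[V (n + 1)|𝓕 n] + R := by
      rw [hsplit]
      refine (condExp_add hT1int' hRint (𝓕 n)).trans ?_
      have e1 := condExp_mul_of_stronglyMeasurable_left hT1sm hT1int' (hVint (n + 1))
      have e2 : P[R|𝓕 n] = R := condExp_of_stronglyMeasurable (𝓕.le n) hRsm hRint
      rw [e2]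
      exact e1.add (ae_eq_refl R)
    refine hce.le.trans ?_
    filter_upwards [hmain a n] with ω h1
    show J a (n + 1) ω * A (n + 1) ω * (P[V (n + 1)|𝓕 n]) ω + R ω ≤ X a n ω
    have h2 : J a (n + 1) ω * (A n ω * V n ω) ≤ J a n ω * (A n ω * V n ω) :=
      mul_le_mul_of_nonneg_right (hJmono a ω n.le_succ)
        (mul_nonneg (hAp n ω).le (hVnn n ω))
    have hR : R ω = ∑ k ∈ Finset.range n,
        (J a (k + 1) ω * (A (k + 1) ω * (α k ω * h k ω)) - J a (k + 1) ω * ξ k ω)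
        + (J a (n + 1) ω * (A (n + 1) ω * (α n ω * h n ω)) - J a (n + 1) ω * ξ n ω) + a := by
      simp only [hRdef]
      rw [Finset.sum_range_succ]
    show _ ≤ J a n ω * (A n ω * V n ω) + _ + _
    rw [hR]
    have h1' : J a (n + 1) ω * A (n + 1) ω * (P[V (n + 1)|𝓕 n]) ω
        = J a (n + 1) ω * (A (n + 1) ω * (P[V (n + 1)|𝓕 n]) ω) := by ring
    linarith [h1, h2]
  -- X is nonnegative
  have hXnn : ∀ (a n : ℕ) (ω : Ω), 0 ≤ X a n ω := by
    intro a n ω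
    have h1 : 0 ≤ J a n ω * (A n ω * V n ω) :=
      mul_nonneg (hJnn a n ω) (mul_nonneg (hAp n ω).le (hVnn n ω))
    have h2 : ∑ k ∈ Finset.range n, J a (k + 1) ω * ξ k ω ≤ (a : ℝ) :=
      sum_indJ_mul_le (fun j => hξnn j ω) (Nat.cast_nonneg a) n
    have h3 : 0 ≤ ∑ k ∈ Finset.range n, J a (k + 1) ω * (A (k + 1) ω * (α k ω * h k ω)) :=
      Finset.sum_nonneg fun k _ => mul_nonneg (hJnn a _ ω)
        (mul_nonneg (hAp _ ω).le (mul_nonneg (hαnn k ω) (hhnn k ω)))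
    have h4 : X a n ω = J a n ω * (A n ω * V n ω)
        + (∑ k ∈ Finset.range n, J a (k + 1) ω * (A (k + 1) ω * (α k ω * h k ω))
          - ∑ k ∈ Finset.range n, J a (k + 1) ω * ξ k ω) + a := by
      show _ + _ + _ = _
      rw [Finset.sum_sub_distrib]
    rw [h4]
    linarith
  -- L¹ bound
  have hXbd : ∀ (a n : ℕ), eLpNorm (X a n) 1 P ≤ ENNReal.ofReal (∫ ω, X a 0 ω ∂P) := by
    intro a n
    have heq : eLpNorm (X a n) 1 P = ENNReal.ofReal (∫ ω, X a n ω ∂P) := by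
      rw [eLpNorm_one_eq_lintegral_enorm,
        lintegral_congr fun ω => Real.enorm_eq_ofReal (hXnn a n ω),
        ← ofReal_integral_eq_lintegral_ofReal (hXint a n) (ae_of_all _ (hXnn a n))]
    rw [heq]
    apply ENNReal.ofReal_le_ofReal
    have := (hsuper a).setIntegral_le (Nat.zero_le n) (MeasurableSet.univ)
    rwa [setIntegral_univ, setIntegral_univ] at this
  -- a.s. convergence of each X a
  have hconvae : ∀ a : ℕ, ∀ᵐ ω ∂P, ∃ c, Tendsto (fun n => X a n ω) atTop (𝓝 c) := by
    intro a
    have hsub : Submartingale (-(X a)) 𝓕 P := (hsuper a).neg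
    have hbdd : ∀ n, eLpNorm ((-(X a)) n) 1 P ≤ (∫ ω, X a 0 ω ∂P).toNNReal := by
      intro n
      have hneg : (-(X a)) n = -(X a n) := rfl
      rw [hneg, eLpNorm_neg]
      exact (hXbd a n).trans le_rfl
    filter_upwards [hsub.exists_ae_tendsto_of_bdd hbdd] with ω hc
    obtain ⟨c, hc⟩ := hc
    refine ⟨-c, ?_⟩
    have := hc.neg
    exact this.congr fun n => by show -(-(X a) n ω) = X a n ω; simp
  have hall : ∀ᵐ ω ∂P, ∀ a : ℕ, ∃ c, Tendsto (fun n => X a n ω) atTop (𝓝 c) :=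
    ae_all_iff.2 hconvae
  filter_upwards [hall, hf, hg, hα, hlb] with ω h1 h2 h3 h4 h5
  exact ptwise (fun t => V t ω) (fun t => f t ω) (fun t => g t ω) (fun t => h t ω)
    (fun t => α t ω) η (fun t => hVnn t ω) (fun t => hfnn t ω) (fun t => hgnn t ω)
    (fun t => hhnn t ω) (fun t => hαnn t ω) hη h5 h2 h3 h4 (fun a => h1 a)
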